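/- Let Ω ⊆ ℝ^m be an open set invariant under permutations of the coordinates, and let f : Ω → ℝ be a C² symmetric function (invariant under permutations of the coordinates). Let λ ∈ Ω have pairwise distinct entries and set A := diag(λ₁,…,λ_m) ∈ Sym_m. Then the function F(B) := f(λ(B)), defined for B in a neighborhood of A in Sym_m, is twice differentiable at A, and for every η ∈ Sym_m its second derivative satisfies D²F(A)[η, η] = ∑_{i,j=1}^m (∂²f/∂λ_i∂λ_j)(λ) η_{ii} η_{jj} + ∑_{i ≠ j} ((f_i(λ) − f_j(λ))/(λ_i − λ_j)) η_{ij}², where f_i := ∂f/∂λ_i. -/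

import Mathlib

open Filter Topology Matrix

attribute [local instance] Matrix.normedAddCommGroup Matrix.normedSpace

/-- The real vector space `Sym_m` of symmetric `m × m` real matrices, as a submodule of
the space of all `m × m` real matrices. -/
def SymMat (m : ℕ) : Submodule ℝ (Matrix (Fin m) (Fin m) ℝ) where
  carrier := {A | A.IsSymm}
  add_mem' := fun {A B} hA hB => by
    simp only [Set.mem_setOf_eq, Matrix.IsSymm, Matrix.transpose_add] at *
    rw [hA, hB]
  zero_mem' := by simp [Matrix.IsSymm]
  smul_mem' := fun c A hA => by
    simp only [Set.mem_setOf_eq, Matrix.IsSymm, Matrix.transpose_smul] at *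
    rw [hA]

/-- A real symmetric matrix is Hermitian. -/
theorem IsSymm.isHermitianR {m : ℕ} {A : Matrix (Fin m) (Fin m) ℝ} (hA : A.IsSymm) :
    A.IsHermitian := by
  rw [Matrix.IsHermitian, Matrix.conjTranspose_eq_transpose_of_trivial]
  exact hA

/-- The eigenvalue vector `λ(A) ∈ ℝ^m` of a symmetric matrix `A ∈ Sym_m` (the eigenvalues
repeated according to multiplicity). -/
noncomputable def eigVec {m : ℕ} (A : SymMat m) : Fin m → ℝ :=
  (IsSymm.isHermitianR A.2).eigenvalues

/-- The `i`-th partial derivative `fᵢ(x) = ∂f/∂λᵢ(x)`. -/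
noncomputable def pd {m : ℕ} (f : (Fin m → ℝ) → ℝ) (x : Fin m → ℝ) (i : Fin m) : ℝ :=
  fderiv ℝ f x (Pi.single i 1)

/-- The second partial derivative `∂²f/∂λᵢ∂λⱼ(x)`. -/
noncomputable def pd2 {m : ℕ} (f : (Fin m → ℝ) → ℝ) (x : Fin m → ℝ) (i j : Fin m) : ℝ :=
  fderiv ℝ (fun y => fderiv ℝ f y (Pi.single j 1)) x (Pi.single i 1)

section Aux
variable {m : ℕ}

abbrev MatE (m : ℕ) := Matrix (Fin m) (Fin m) ℝ
abbrev XSp (m : ℕ) := MatE m × ((Fin m → ℝ) × ℝ)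

/-- The eigen-system map. -/
noncomputable def Psi (m : ℕ) : XSp m → XSp m := fun p =>
  (p.1, (p.1 *ᵥ p.2.1 - p.2.2 • p.2.1, (∑ k, p.2.1 k ^ 2) - 1))

theorem contDiff_Psi : ContDiff ℝ ⊤ (Psi m) := by
  apply ContDiff.prodMk contDiff_fst
  apply ContDiff.prodMk
  · rw [contDiff_pi]
    intro k
    have h1 : ContDiff ℝ ⊤ (fun p : XSp m => ∑ l, p.1 k l * p.2.1 l) := by
      apply ContDiff.sum
      intro l _
      exact (contDiff_pi.mp ((contDiff_pi.mp contDiff_fst) k) l).mul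
        (contDiff_pi.mp (contDiff_fst.comp contDiff_snd) l)
    have h2 : ContDiff ℝ ⊤ (fun p : XSp m => p.2.2 * p.2.1 k) :=
      (contDiff_snd.comp contDiff_snd).mul
        (contDiff_pi.mp (contDiff_fst.comp contDiff_snd) k)
    have : (fun p : XSp m => (p.1 *ᵥ p.2.1 - p.2.2 • p.2.1) k)
        = fun p : XSp m => (∑ l, p.1 k l * p.2.1 l) - p.2.2 * p.2.1 k := by
      funext p
      simp [Matrix.mulVec, dotProduct]
    rw [this]
    exact h1.sub h2
  · apply ContDiff.sub _ contDiff_const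
    apply ContDiff.sum
    intro k _
    exact (contDiff_pi.mp (contDiff_fst.comp contDiff_snd) k).pow 2

section P0
variable (lam : Fin m → ℝ) (i : Fin m)

noncomputable def p0 (lam : Fin m → ℝ) (i : Fin m) : XSp m :=
  (Matrix.diagonal lam, (Pi.single i 1, lam i))

theorem Psi_p0 : Psi m (p0 lam i) = (Matrix.diagonal lam, (0, 0)) := by
  unfold Psi p0
  refine Prod.ext rfl (Prod.ext ?_ ?_)
  · funext k
    simp [Matrix.mulVec_single, Pi.single_apply, Matrix.diagonal]
    by_cases h : k = i <;> simp [h, Matrix.mulVec, dotProduct, Pi.single_apply,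
      Matrix.diagonal, Finset.sum_ite_eq']
  · simp only [Prod.snd]
    have : ∀ k, (Pi.single i 1 : Fin m → ℝ) k ^ 2 = if k = i then 1 else 0 := by
      intro k; by_cases h : k = i <;> simp [h, Pi.single_apply]
    rw [Finset.sum_congr rfl (fun k _ => this k)]
    simp

/-- Explicit formula for the derivative of `Psi` at `p0`. -/
noncomputable def DPsi (lam : Fin m → ℝ) (i : Fin m) : XSp m → XSp m := fun x =>
  (x.1, (fun k => x.1 k i + lam k * x.2.1 k
      - (x.2.2 * (Pi.single i 1 : Fin m → ℝ) k + lam i * x.2.1 k), 2 * x.2.1 i))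

theorem hasDerivAt_Psi_line (x : XSp m) :
    HasDerivAt (fun s : ℝ => Psi m (p0 lam i + s • x)) (DPsi lam i x) 0 := by
  have e1 : ∀ s : ℝ, (p0 lam i + s • x).1 = Matrix.diagonal lam + s • x.1 := fun s => rfl
  have e2 : ∀ s : ℝ, (p0 lam i + s • x).2.1 = (Pi.single i 1 : Fin m → ℝ) + s • x.2.1 :=
    fun s => rfl
  have e3 : ∀ s : ℝ, (p0 lam i + s • x).2.2 = lam i + s * x.2.2 := fun s => rfl
  unfold Psi DPsi
  apply HasDerivAt.prodMk
  · simp only [e1]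
    simpa using ((hasDerivAt_id (0:ℝ)).smul_const x.1).const_add (Matrix.diagonal lam)
  apply HasDerivAt.prodMk
  · rw [hasDerivAt_pi]
    intro k
    have key : (fun s : ℝ => ((p0 lam i + s • x).1 *ᵥ (p0 lam i + s • x).2.1
          - (p0 lam i + s • x).2.2 • (p0 lam i + s • x).2.1) k)
        = fun s : ℝ => (∑ l, (Matrix.diagonal lam k l + s * x.1 k l)
            * ((Pi.single i 1 : Fin m → ℝ) l + s * x.2.1 l))
          - ((lam i + s * x.2.2) * ((Pi.single i 1 : Fin m → ℝ) k + s * x.2.1 k)) := by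
      funext s
      rw [e1, e2, e3]
      simp [Matrix.mulVec, dotProduct]
      ring
    rw [key]
    have h2 : HasDerivAt (fun s : ℝ => (∑ l, (Matrix.diagonal lam k l + s * x.1 k l)
            * ((Pi.single i 1 : Fin m → ℝ) l + s * x.2.1 l))
          - ((lam i + s * x.2.2) * ((Pi.single i 1 : Fin m → ℝ) k + s * x.2.1 k)))
        ((∑ l, (x.1 k l * (Pi.single i 1 : Fin m → ℝ) l + Matrix.diagonal lam k l * x.2.1 l))
          - (x.2.2 * (Pi.single i 1 : Fin m → ℝ) k + lam i * x.2.1 k)) 0 := by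
      apply HasDerivAt.sub
      · apply HasDerivAt.fun_sum
        intro l _
        have ha : HasDerivAt (fun s : ℝ => Matrix.diagonal lam k l + s * x.1 k l) (x.1 k l) 0 := by
          simpa using ((hasDerivAt_id (0:ℝ)).mul_const (x.1 k l)).const_add (Matrix.diagonal lam k l)
        have hb : HasDerivAt (fun s : ℝ => (Pi.single i 1 : Fin m → ℝ) l + s * x.2.1 l)
            (x.2.1 l) 0 := by
          simpa using ((hasDerivAt_id (0:ℝ)).mul_const (x.2.1 l)).const_add ((Pi.single i 1 : Fin m → ℝ) l)
        simpa using ha.fun_mul hb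
      · have ha : HasDerivAt (fun s : ℝ => lam i + s * x.2.2) (x.2.2) 0 := by
          simpa using ((hasDerivAt_id (0:ℝ)).mul_const (x.2.2)).const_add (lam i)
        have hb : HasDerivAt (fun s : ℝ => (Pi.single i 1 : Fin m → ℝ) k + s * x.2.1 k)
            (x.2.1 k) 0 := by
          simpa using ((hasDerivAt_id (0:ℝ)).mul_const (x.2.1 k)).const_add ((Pi.single i 1 : Fin m → ℝ) k)
        simpa using ha.fun_mul hb
    have h3 : (∑ l, (x.1 k l * (Pi.single i 1 : Fin m → ℝ) l + Matrix.diagonal lam k l * x.2.1 l))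
        = x.1 k i + lam k * x.2.1 k := by
      rw [Finset.sum_add_distrib]
      congr 1
      · simp [Pi.single_apply, Finset.sum_ite_eq']
      · simp [Matrix.diagonal_apply, Finset.sum_ite_eq]
    rw [h3] at h2
    exact h2
  · have key : (fun s : ℝ => (∑ k, (p0 lam i + s • x).2.1 k ^ 2) - 1)
        = fun s : ℝ => (∑ k, ((Pi.single i 1 : Fin m → ℝ) k + s * x.2.1 k) ^ 2) - 1 := by
      funext s; rw [e2]; rfl
    rw [key]
    have h2 : HasDerivAt (fun s : ℝ => (∑ k, ((Pi.single i 1 : Fin m → ℝ) k + s * x.2.1 k) ^ 2) - 1)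
        (∑ k, 2 * ((Pi.single i 1 : Fin m → ℝ) k) * x.2.1 k) 0 := by
      apply HasDerivAt.sub_const
      apply HasDerivAt.fun_sum
      intro k _
      have hb : HasDerivAt (fun s : ℝ => (Pi.single i 1 : Fin m → ℝ) k + s * x.2.1 k)
          (x.2.1 k) 0 := by
        simpa using ((hasDerivAt_id (0:ℝ)).mul_const (x.2.1 k)).const_add ((Pi.single i 1 : Fin m → ℝ) k)
      have := hb.fun_mul hb
      have e : (fun s : ℝ => ((Pi.single i 1 : Fin m → ℝ) k + s * x.2.1 k) * ((Pi.single i 1 : Fin m → ℝ) k + s * x.2.1 k)) = fun s : ℝ => ((Pi.single i 1 : Fin m → ℝ) k + s * x.2.1 k) ^ 2 := by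
        funext s; ring
      rw [e] at this
      exact this.congr_deriv (by ring)
    have h3 : (∑ k, 2 * ((Pi.single i 1 : Fin m → ℝ) k) * x.2.1 k) = 2 * x.2.1 i := by
      simp [Pi.single_apply, Finset.sum_ite_eq']
    rw [h3] at h2
    exact h2

end P0

section IFT
variable {lam : Fin m → ℝ} {i : Fin m}

theorem fderiv_Psi_eq (x : XSp m) :
    fderiv ℝ (Psi m) (p0 lam i) x = DPsi lam i x := by
  have hdiff : DifferentiableAt ℝ (Psi m) (p0 lam i) :=
    (contDiff_Psi.differentiable (by simp)).differentiableAt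
  have hline : HasDerivAt (fun s : ℝ => Psi m (p0 lam i + s • x))
      (fderiv ℝ (Psi m) (p0 lam i) x) 0 := by
    have hc : HasDerivAt (fun s : ℝ => p0 lam i + s • x) x 0 := by
      have := ((hasDerivAt_id' (0:ℝ)).smul_const x).const_add (p0 lam i); rwa [one_smul] at this
    have hd2 : HasFDerivAt (Psi m) (fderiv ℝ (Psi m) (p0 lam i)) (p0 lam i + (0:ℝ) • x) := by
      simpa using hdiff.hasFDerivAt
    have := hd2.comp_hasDerivAt 0 hc
    exact this
  exact hline.unique (hasDerivAt_Psi_line lam i x)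

theorem DPsi_inj (hdist : Function.Injective lam) :
    Function.Injective (fderiv ℝ (Psi m) (p0 lam i)) := by
  have hker : ∀ x : XSp m, DPsi lam i x = 0 → x = 0 := by
    intro x hx
    unfold DPsi at hx
    have h1 : x.1 = 0 := congrArg Prod.fst hx
    have h2 : (fun k => x.1 k i + lam k * x.2.1 k
        - (x.2.2 * (Pi.single i 1 : Fin m → ℝ) k + lam i * x.2.1 k)) = (0 : Fin m → ℝ) :=
      congrArg (fun p : XSp m => p.2.1) hx
    have h3 : (2 : ℝ) * x.2.1 i = 0 := congrArg (fun p : XSp m => p.2.2) hx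
    have hwi : x.2.1 i = 0 := by linarith
    have hw : x.2.1 = 0 := by
      funext k
      by_cases hk : k = i
      · rw [hk]; exact hwi
      · have := congrFun h2 k
        simp [h1, Pi.single_apply, hk] at this
        have hne : lam k - lam i ≠ 0 := sub_ne_zero.mpr (fun h => hk (hdist h))
        have : (lam k - lam i) * x.2.1 k = 0 := by linarith
        rcases mul_eq_zero.mp this with h | h
        · exact absurd h hne
        · exact h
    have ht : x.2.2 = 0 := by
      have := congrFun h2 i
      simp [h1, hw] at this
      exact this
    have : x = (x.1, (x.2.1, x.2.2)) := rfl
    rw [this, h1, hw, ht]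
    rfl
  intro x y hxy
  have : DPsi lam i (x - y) = 0 := by
    have hx := fderiv_Psi_eq (lam := lam) (i := i) x
    have hy := fderiv_Psi_eq (lam := lam) (i := i) y
    have := (fderiv ℝ (Psi m) (p0 lam i)).map_sub x y
    rw [hxy, sub_self] at this
    rw [fderiv_Psi_eq] at this
    exact this.symm ▸ rfl
  have := hker _ this
  exact sub_eq_zero.mp this

theorem exists_eig_branch (hdist : Function.Injective lam) (i : Fin m) :
    ∃ (mu : MatE m → ℝ) (v : MatE m → (Fin m → ℝ)),
      ContDiffAt ℝ ⊤ mu (Matrix.diagonal lam) ∧ ContDiffAt ℝ ⊤ v (Matrix.diagonal lam) ∧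
      mu (Matrix.diagonal lam) = lam i ∧ v (Matrix.diagonal lam) = Pi.single i 1 ∧
      ∀ᶠ B in 𝓝 (Matrix.diagonal lam), B *ᵥ v B = mu B • v B ∧ (∑ k, v B k ^ 2) = 1 := by
  classical
  set D := fderiv ℝ (Psi m) (p0 lam i) with hD
  have hinj : Function.Injective (D : XSp m →ₗ[ℝ] XSp m) := DPsi_inj hdist
  have hsurj : Function.Surjective (D : XSp m →ₗ[ℝ] XSp m) :=
    (LinearMap.injective_iff_surjective).mp hinj
  let eqvL : XSp m ≃ₗ[ℝ] XSp m := LinearEquiv.ofBijective _ ⟨hinj, hsurj⟩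
  let eqv : XSp m ≃L[ℝ] XSp m := eqvL.toContinuousLinearEquiv
  have hcoe : (eqv : XSp m →L[ℝ] XSp m) = D := by
    apply ContinuousLinearMap.ext
    intro x
    rfl
  have hf' : HasFDerivAt (Psi m) (eqv : XSp m →L[ℝ] XSp m) (p0 lam i) := by
    rw [hcoe]
    exact (contDiff_Psi.differentiable (by simp)).differentiableAt.hasFDerivAt
  have hcAt : ContDiffAt ℝ ⊤ (Psi m) (p0 lam i) := contDiff_Psi.contDiffAt
  have hs : HasStrictFDerivAt (Psi m) (eqv : XSp m →L[ℝ] XSp m) (p0 lam i) :=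
    hcAt.hasStrictFDerivAt' hf' (by simp)
  set N := hs.localInverse (Psi m) eqv (p0 lam i) with hN
  have hNcd : ContDiffAt ℝ ⊤ N (Psi m (p0 lam i)) := hcAt.to_localInverse hf' (by simp)
  have hNval : N (Psi m (p0 lam i)) = p0 lam i := hs.localInverse_apply_image
  have hNright : ∀ᶠ y in 𝓝 (Psi m (p0 lam i)), Psi m (N y) = y := hs.eventually_right_inverse
  have hPsi0 : Psi m (p0 lam i) = (Matrix.diagonal lam, ((0 : Fin m → ℝ), (0 : ℝ))) :=
    Psi_p0 lam i
  let emb : MatE m → XSp m := fun B => (B, (0, 0))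
  have hembc : ContDiff ℝ ⊤ emb := contDiff_id.prodMk contDiff_const
  have hemb0 : emb (Matrix.diagonal lam) = Psi m (p0 lam i) := by rw [hPsi0]
  refine ⟨fun B => (N (emb B)).2.2, fun B => (N (emb B)).2.1, ?_, ?_, ?_, ?_, ?_⟩
  · have h1 : ContDiffAt ℝ ⊤ (fun B => N (emb B)) (Matrix.diagonal lam) := by
      apply ContDiffAt.comp
      · rw [hemb0] at *; exact hNcd
      · exact hembc.contDiffAt
    exact (contDiff_snd.comp contDiff_snd).contDiffAt.comp _ h1
  · have h1 : ContDiffAt ℝ ⊤ (fun B => N (emb B)) (Matrix.diagonal lam) := by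
      apply ContDiffAt.comp
      · rw [hemb0] at *; exact hNcd
      · exact hembc.contDiffAt
    exact (contDiff_fst.comp contDiff_snd).contDiffAt.comp _ h1
  · show (N (emb (Matrix.diagonal lam))).2.2 = lam i
    rw [hemb0, hNval]; rfl
  · show (N (emb (Matrix.diagonal lam))).2.1 = Pi.single i 1
    rw [hemb0, hNval]; rfl
  · have htend : Tendsto emb (𝓝 (Matrix.diagonal lam)) (𝓝 (Psi m (p0 lam i))) := by
      rw [← hemb0]
      exact (hembc.continuous.tendsto _)
    filter_upwards [htend.eventually hNright] with B hB
    have h1 : (N (emb B)).1 = B := congrArg Prod.fst hB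
    have h2 : (N (emb B)).1 *ᵥ (N (emb B)).2.1 - (N (emb B)).2.2 • (N (emb B)).2.1 = 0 :=
      congrArg (fun p : XSp m => p.2.1) hB
    have h3 : (∑ k, (N (emb B)).2.1 k ^ 2) - 1 = 0 :=
      congrArg (fun p : XSp m => p.2.2) hB
    rw [h1] at h2
    exact ⟨sub_eq_zero.mp h2, by linarith⟩

end IFT

theorem exists_mu {lam : Fin m → ℝ} (hdist : Function.Injective lam) :
    ∃ (mu : MatE m → Fin m → ℝ) (v : Fin m → MatE m → (Fin m → ℝ)),
      ContDiffAt ℝ ⊤ mu (Matrix.diagonal lam) ∧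
      (∀ i, ContDiffAt ℝ ⊤ (v i) (Matrix.diagonal lam)) ∧
      mu (Matrix.diagonal lam) = lam ∧ (∀ i, v i (Matrix.diagonal lam) = Pi.single i 1) ∧
      (∀ᶠ B in 𝓝 (Matrix.diagonal lam),
        ∀ i, B *ᵥ v i B = mu B i • v i B ∧ (∑ k, v i B k ^ 2) = 1) ∧
      (∀ᶠ B in 𝓝 (Matrix.diagonal lam), Function.Injective (mu B)) := by
  classical
  choose mui vi hmuc hvc hmu0 hv0 hev using fun i : Fin m => exists_eig_branch hdist i
  refine ⟨fun B i => mui i B, vi, ?_, hvc, ?_, hv0, ?_, ?_⟩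
  · exact contDiffAt_pi.mpr hmuc
  · funext i; exact hmu0 i
  · exact (eventually_all.mpr hev)
  · have hne : ∀ p : Fin m × Fin m, p.1 ≠ p.2 →
        ∀ᶠ B in 𝓝 (Matrix.diagonal lam), mui p.1 B ≠ mui p.2 B := by
      intro p hp
      have hc : ContinuousAt (fun B => mui p.1 B - mui p.2 B) (Matrix.diagonal lam) :=
        ((hmuc p.1).continuousAt.sub (hmuc p.2).continuousAt)
      have hval : mui p.1 (Matrix.diagonal lam) - mui p.2 (Matrix.diagonal lam) ≠ 0 := by
        rw [hmu0, hmu0]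
        exact sub_ne_zero.mpr (fun h => hp (hdist h))
      filter_upwards [hc.eventually_ne hval] with B hB
      exact fun h => hB (by rw [h, sub_self])
    have hall : ∀ᶠ B in 𝓝 (Matrix.diagonal lam),
        ∀ p : Fin m × Fin m, p.1 ≠ p.2 → mui p.1 B ≠ mui p.2 B := by
      rw [Filter.eventually_all]
      intro p
      by_cases hp : p.1 = p.2
      · exact Filter.Eventually.of_forall (fun B h => absurd hp h)
      · filter_upwards [hne p hp] with B hB
        exact fun _ => hB
    filter_upwards [hall] with B hB
    intro a b hab
    by_contra hne'
    exact hB (a, b) hne' hab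

theorem det_sub_smul_one_eq {B : MatE m} (hB : B.IsHermitian) (c : ℝ) :
    (B - c • 1).det = ∏ i, (hB.eigenvalues i - c) := by
  classical
  set U : MatE m := (hB.eigenvectorUnitary : MatE m) with hU
  have hUU : U * star U = 1 := (Matrix.mem_unitaryGroup_iff).mp hB.eigenvectorUnitary.2
  have hsm : (RCLike.ofReal ∘ hB.eigenvalues : Fin m → ℝ) = hB.eigenvalues := by
    funext k; simp [RCLike.ofReal_real_eq_id]
  have key : B - c • 1 = U * Matrix.diagonal (fun k => hB.eigenvalues k - c) * star U := by
    have h1 : (c • (1 : MatE m)) = U * (c • 1) * star U := by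
      rw [mul_smul_comm, mul_one, smul_mul_assoc, hUU]
    conv_lhs => rw [hB.spectral_theorem, Unitary.conjStarAlgAut_apply, h1]
    rw [← Matrix.sub_mul, ← Matrix.mul_sub, hsm, Matrix.smul_one_eq_diagonal,
      Matrix.diagonal_sub]
  rw [key, Matrix.det_mul_right_comm, Matrix.det_mul, hUU, Matrix.det_one, one_mul,
    Matrix.det_diagonal]

theorem multiset_eig_eq {B : MatE m} (hB : B.IsHermitian) {mu : Fin m → ℝ}
    (hmu : Function.Injective mu) (hroot : ∀ j, (B - mu j • 1).det = 0) :
    Multiset.map hB.eigenvalues Finset.univ.val = Multiset.map mu Finset.univ.val := by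
  classical
  set P : Polynomial ℝ :=
    (Multiset.map (fun a => Polynomial.X - Polynomial.C a)
      (Multiset.map hB.eigenvalues Finset.univ.val)).prod with hP
  have hroots : P.roots = Multiset.map hB.eigenvalues Finset.univ.val :=
    Polynomial.roots_multiset_prod_X_sub_C _
  have hmem : ∀ j, mu j ∈ P.roots := by
    intro j
    rw [hroots]
    have h0 : ∏ i, (hB.eigenvalues i - mu j) = 0 := by
      rw [← det_sub_smul_one_eq hB]; exact hroot j
    obtain ⟨i, _, hi⟩ := Finset.prod_eq_zero_iff.mp h0
    have : hB.eigenvalues i = mu j := by linarith [sub_eq_zero.mp hi]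
    rw [← this]
    exact Multiset.mem_map.mpr ⟨i, Finset.mem_univ_val _, rfl⟩
  have hnodup : (Multiset.map mu Finset.univ.val).Nodup :=
    Multiset.Nodup.map hmu Finset.univ.nodup
  have hle : Multiset.map mu Finset.univ.val ≤ P.roots := by
    rw [Multiset.le_iff_subset hnodup]
    intro a ha
    obtain ⟨j, _, rfl⟩ := Multiset.mem_map.mp ha
    exact hmem j
  have hcard : Multiset.card P.roots ≤ Multiset.card (Multiset.map mu Finset.univ.val) := by
    rw [hroots]; simp
  rw [← hroots]
  exact (Multiset.eq_of_le_of_card_le hle hcard).symm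

theorem exists_perm_comp {v w : Fin m → ℝ} (hw : Function.Injective w)
    (h : Multiset.map v Finset.univ.val = Multiset.map w Finset.univ.val) :
    ∃ σ : Equiv.Perm (Fin m), v = w ∘ σ := by
  classical
  have hv : Function.Injective v := by
    have hnd : (Multiset.map v Finset.univ.val).Nodup := by
      rw [h]; exact Multiset.Nodup.map hw Finset.univ.nodup
    intro a b hab
    have := Multiset.inj_on_of_nodup_map hnd
    exact this a (Finset.mem_univ_val _) b (Finset.mem_univ_val _) hab
  have hex : ∀ i, ∃ j, w j = v i := by
    intro i
    have : v i ∈ Multiset.map w Finset.univ.val := by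
      rw [← h]; exact Multiset.mem_map.mpr ⟨i, Finset.mem_univ_val _, rfl⟩
    obtain ⟨j, _, hj⟩ := Multiset.mem_map.mp this
    exact ⟨j, hj⟩
  choose σ' hσ' using hex
  have hinj : Function.Injective σ' := by
    intro a b hab
    apply hv
    rw [← hσ' a, ← hσ' b, hab]
  have hbij : Function.Bijective σ' := (Finite.injective_iff_bijective).mp hinj
  exact ⟨Equiv.ofBijective σ' hbij, by funext i; exact (hσ' i).symm⟩

theorem dot_mulVec_symm {M : MatE m} (hM : M.IsSymm) (x y : Fin m → ℝ) :
    x ⬝ᵥ (M *ᵥ y) = (M *ᵥ x) ⬝ᵥ y := by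
  rw [Matrix.dotProduct_mulVec]
  conv_lhs => rw [← hM]
  rw [Matrix.vecMul_transpose, dotProduct_comm]

theorem hasDerivAt_dot {a b : ℝ → Fin m → ℝ} {a' b' : Fin m → ℝ} {s : ℝ}
    (ha : HasDerivAt a a' s) (hb : HasDerivAt b b' s) :
    HasDerivAt (fun t => a t ⬝ᵥ b t) (a' ⬝ᵥ b s + a s ⬝ᵥ b') s := by
  have : ∀ t, a t ⬝ᵥ b t = ∑ k, a t k * b t k := fun t => rfl
  simp only [this]
  have hval : (a' ⬝ᵥ b s + a s ⬝ᵥ b') = ∑ k, (a' k * b s k + a s k * b' k) := by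
    rw [Finset.sum_add_distrib]; rfl
  rw [hval]
  apply HasDerivAt.fun_sum
  intro k _
  exact (hasDerivAt_pi.mp ha k).mul (hasDerivAt_pi.mp hb k)

theorem hasDerivAt_line_mulVec {M N : MatE m} {b : ℝ → Fin m → ℝ} {b' : Fin m → ℝ} {s : ℝ}
    (hb : HasDerivAt b b' s) :
    HasDerivAt (fun t => (M + t • N) *ᵥ b t) (N *ᵥ b s + (M + s • N) *ᵥ b') s := by
  rw [hasDerivAt_pi]
  intro k
  have : ∀ t, ((M + t • N) *ᵥ b t) k = ∑ l, (M k l + t * N k l) * b t l := by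
    intro t; simp [Matrix.mulVec, dotProduct]
  simp only [this]
  have hval : (N *ᵥ b s + (M + s • N) *ᵥ b') k
      = ∑ l, (N k l * b s l + (M k l + s * N k l) * b' l) := by
    rw [Finset.sum_add_distrib]
    simp [Matrix.mulVec, dotProduct]
  rw [hval]
  apply HasDerivAt.fun_sum
  intro l _
  have h1 : HasDerivAt (fun t : ℝ => M k l + t * N k l) (N k l) s := by
    simpa using ((hasDerivAt_id s).mul_const (N k l)).const_add (M k l)
  exact h1.mul (hasDerivAt_pi.mp hb l)

theorem hasDerivAt_const_mulVec {N : MatE m} {b : ℝ → Fin m → ℝ} {b' : Fin m → ℝ} {s : ℝ}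
    (hb : HasDerivAt b b' s) :
    HasDerivAt (fun t => N *ᵥ b t) (N *ᵥ b') s := by
  rw [hasDerivAt_pi]
  intro k
  have : ∀ t, (N *ᵥ b t) k = ∑ l, N k l * b t l := fun t => rfl
  simp only [this]
  have hval : (N *ᵥ b') k = ∑ l, N k l * b' l := rfl
  rw [hval]
  exact HasDerivAt.fun_sum fun l _ => (hasDerivAt_pi.mp hb l).const_mul (N k l)

theorem line_derivs {lam : Fin m → ℝ} (hdist : Function.Injective lam)
    {em : MatE m} (hems : em.IsSymm)
    {mu : MatE m → Fin m → ℝ} {v : Fin m → MatE m → Fin m → ℝ}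
    (hmuc : ContDiffAt ℝ ⊤ mu (Matrix.diagonal lam))
    (hvc : ∀ i, ContDiffAt ℝ ⊤ (v i) (Matrix.diagonal lam))
    (hmu0 : mu (Matrix.diagonal lam) = lam)
    (hv0 : ∀ i, v i (Matrix.diagonal lam) = Pi.single i 1)
    (hev : ∀ᶠ B in 𝓝 (Matrix.diagonal lam),
      ∀ i, B *ᵥ v i B = mu B i • v i B ∧ (∑ k, v i B k ^ 2) = 1)
    (i : Fin m) :
    HasDerivAt (fun s : ℝ => mu (Matrix.diagonal lam + s • em) i) (em i i) 0 ∧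
    HasDerivAt (deriv (fun s : ℝ => mu (Matrix.diagonal lam + s • em) i))
      (∑ k ∈ Finset.univ.erase i, 2 * em i k ^ 2 / (lam i - lam k)) 0 := by
  classical
  set A0 := Matrix.diagonal lam with hA0
  set L : ℝ → MatE m := fun s => A0 + s • em with hLdef
  have hLd : ∀ s : ℝ, HasDerivAt L em s := by
    intro s
    have := ((hasDerivAt_id' s).smul_const em).const_add A0; rwa [one_smul] at this
  have hL0 : L 0 = A0 := by simp [hLdef]
  have hLten : Tendsto L (𝓝 0) (𝓝 A0) := by
    rw [← hL0]
    exact ((hLd 0).continuousAt).tendsto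
  have hLsymm : ∀ s, (L s).IsSymm := by
    intro s
    unfold Matrix.IsSymm
    rw [hLdef]
    simp only [Matrix.transpose_add, Matrix.transpose_smul]
    rw [hems, hA0, Matrix.diagonal_transpose]
  set w : ℝ → Fin m → ℝ := fun s => v i (L s) with hwdef
  set h : ℝ → ℝ := fun s => mu (L s) i with hhdef
  -- eventual differentiability
  have evv : ∀ᶠ s in 𝓝 (0:ℝ), DifferentiableAt ℝ w s := by
    have h2 : ContDiffAt ℝ 2 (v i) A0 := (hvc i).of_le le_top
    filter_upwards [hLten.eventually (h2.eventually (by simp))] with s hs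
    exact (hs.differentiableAt two_ne_zero).comp s (hLd s).differentiableAt
  have evh : ∀ᶠ s in 𝓝 (0:ℝ), DifferentiableAt ℝ h s := by
    have h2 : ContDiffAt ℝ 2 mu A0 := hmuc.of_le le_top
    filter_upwards [hLten.eventually (h2.eventually (by simp))] with s hs
    have : DifferentiableAt ℝ (fun B => mu B i) (L s) :=
      ((contDiffAt_pi.mp hs i).differentiableAt two_ne_zero)
    exact this.comp s (hLd s).differentiableAt
  have evid : ∀ᶠ s in 𝓝 (0:ℝ), (L s *ᵥ w s = h s • w s ∧ (∑ k, w s k ^ 2) = 1) := by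
    filter_upwards [hLten.eventually hev] with s hs
    exact hs i
  have evall := evv.and (evh.and evid)
  have evallnhds := eventually_eventually_nhds.mpr evall
  have w0 : w 0 = Pi.single i 1 := by rw [hwdef]; simp only [hL0]; exact hv0 i
  have h0 : h 0 = lam i := by rw [hhdef]; simp only [hL0, hmu0]
  -- Step 1: first derivative identity, eventually
  have step1 : ∀ᶠ s in 𝓝 (0:ℝ), HasDerivAt h (w s ⬝ᵥ (em *ᵥ w s)) s := by
    filter_upwards [evall, evallnhds] with s hs hnear
    have hws := hs.1
    have hid1 := hs.2.2.1
    have hw' : HasDerivAt w (deriv w s) s := hws.hasDerivAt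
    set w' := deriv w s
    -- orthogonality
    have hnorm : ∀ᶠ t in 𝓝 s, (fun t => w t ⬝ᵥ w t) t = (fun _ => (1:ℝ)) t := by
      filter_upwards [hnear] with t ht
      have : w t ⬝ᵥ w t = ∑ k, w t k ^ 2 := by
        unfold dotProduct
        exact Finset.sum_congr rfl fun k _ => (sq (w t k)).symm
      rw [this, ht.2.2.2]
    have hd1 : HasDerivAt (fun t => w t ⬝ᵥ w t) (w' ⬝ᵥ w s + w s ⬝ᵥ w') s :=
      hasDerivAt_dot hw' hw'
    have hd2 : HasDerivAt (fun t => w t ⬝ᵥ w t) 0 s :=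
      (hasDerivAt_const s (1:ℝ)).congr_of_eventuallyEq hnorm
    have horth : w s ⬝ᵥ w' = 0 := by
      have := hd1.unique hd2
      have hc : w' ⬝ᵥ w s = w s ⬝ᵥ w' := dotProduct_comm _ _
      rw [hc] at this
      linarith
    -- derivative of R t := w t ⬝ᵥ (L t *ᵥ w t)
    have hR : HasDerivAt (fun t => w t ⬝ᵥ (L t *ᵥ w t))
        (w' ⬝ᵥ (L s *ᵥ w s) + w s ⬝ᵥ (em *ᵥ w s + L s *ᵥ w')) s :=
      hasDerivAt_dot hw' (hasDerivAt_line_mulVec hw')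
    have hval : w' ⬝ᵥ (L s *ᵥ w s) + w s ⬝ᵥ (em *ᵥ w s + L s *ᵥ w')
        = w s ⬝ᵥ (em *ᵥ w s) := by
      rw [hid1, dotProduct_add]
      have e1 : w' ⬝ᵥ (h s • w s) = h s * (w' ⬝ᵥ w s) := by
        rw [dotProduct_smul]; rfl
      have e2 : w s ⬝ᵥ (L s *ᵥ w') = h s * (w s ⬝ᵥ w') := by
        rw [dot_mulVec_symm (hLsymm s), hid1, smul_dotProduct]; rfl
      rw [e1, e2, dotProduct_comm w' (w s), horth]
      ring
    rw [hval] at hR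
    -- h agrees with R near s
    have hfeq : h =ᶠ[𝓝 s] fun t => w t ⬝ᵥ (L t *ᵥ w t) := by
      filter_upwards [hnear] with t ht
      have hn : w t ⬝ᵥ w t = 1 := by
        have : w t ⬝ᵥ w t = ∑ k, w t k ^ 2 := by
          unfold dotProduct
          exact Finset.sum_congr rfl fun k _ => (sq (w t k)).symm
        rw [this, ht.2.2.2]
      rw [ht.2.2.1, dotProduct_smul]
      show h t = h t * (w t ⬝ᵥ w t)
      rw [hn, mul_one]
    exact hR.congr_of_eventuallyEq hfeq
  -- first derivative at 0
  have hsingle : ((Pi.single i 1 : Fin m → ℝ) ⬝ᵥ (em *ᵥ Pi.single i 1)) = em i i := by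
    rw [single_dotProduct]
    simp [Matrix.mulVec_single]
  have hder1 : HasDerivAt h (em i i) 0 := by
    have := step1.self_of_nhds
    rw [w0, hsingle] at this
    exact this
  refine ⟨hder1, ?_⟩
  -- Step 2: compute w'(0)
  have hw0d : HasDerivAt w (deriv w 0) 0 := evv.self_of_nhds.hasDerivAt
  set w'0 := deriv w 0 with hw'0def
  have hlhs : HasDerivAt (fun t => L t *ᵥ w t) (em *ᵥ w 0 + L 0 *ᵥ w'0) 0 :=
    hasDerivAt_line_mulVec hw0d
  have hrhs : HasDerivAt (fun t => h t • w t) (em i i • w 0 + h 0 • w'0) 0 := by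
    have := hder1.smul hw0d
    rwa [add_comm] at this
  have hveq : (fun t => L t *ᵥ w t) =ᶠ[𝓝 (0:ℝ)] fun t => h t • w t := by
    filter_upwards [evid] with t ht
    exact ht.1
  have hDeq : em *ᵥ w 0 + L 0 *ᵥ w'0 = em i i • w 0 + h 0 • w'0 :=
    (hlhs.congr_of_eventuallyEq hveq.symm).unique hrhs
  -- orthogonality at 0
  have horth0 : w 0 ⬝ᵥ w'0 = 0 := by
    have hnorm : ∀ᶠ t in 𝓝 (0:ℝ), (fun t => w t ⬝ᵥ w t) t = (fun _ => (1:ℝ)) t := by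
      filter_upwards [evid] with t ht
      have : w t ⬝ᵥ w t = ∑ k, w t k ^ 2 := by
        unfold dotProduct
        exact Finset.sum_congr rfl fun k _ => (sq (w t k)).symm
      rw [this, ht.2]
    have hd1 : HasDerivAt (fun t => w t ⬝ᵥ w t) (w'0 ⬝ᵥ w 0 + w 0 ⬝ᵥ w'0) 0 :=
      hasDerivAt_dot hw0d hw0d
    have hd2 : HasDerivAt (fun t => w t ⬝ᵥ w t) 0 0 :=
      (hasDerivAt_const 0 (1:ℝ)).congr_of_eventuallyEq hnorm
    have := hd1.unique hd2
    have hc : w'0 ⬝ᵥ w 0 = w 0 ⬝ᵥ w'0 := dotProduct_comm _ _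
    rw [hc] at this
    linarith
  have hw'0i : w'0 i = 0 := by
    have : w 0 ⬝ᵥ w'0 = w'0 i := by rw [w0, single_dotProduct, one_mul]
    rw [← this, horth0]
  have hw'0k : ∀ k, k ≠ i → w'0 k = em k i / (lam i - lam k) := by
    intro k hk
    have hcomp := congrFun hDeq k
    have h1 : (em *ᵥ w 0) k = em k i := by
      rw [w0]; simp [Matrix.mulVec_single]
    have h2 : (L 0 *ᵥ w'0) k = lam k * w'0 k := by
      rw [hL0, hA0]; simp [Matrix.diagonal_mulVec_single, Matrix.mulVec_diagonal]
    have h3 : (em i i • w 0) k = 0 := by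
      rw [w0]; simp [Pi.single_apply, hk]
    have h4 : (h 0 • w'0) k = lam i * w'0 k := by rw [h0]; rfl
    simp only [Pi.add_apply] at hcomp
    rw [h1, h2, h3, h4] at hcomp
    have hne : lam i - lam k ≠ 0 := sub_ne_zero.mpr (fun hcon => hk (hdist hcon).symm)
    field_simp
    linarith
  -- Step 3: second derivative
  have hR2 : HasDerivAt (fun s => w s ⬝ᵥ (em *ᵥ w s))
      (w'0 ⬝ᵥ (em *ᵥ w 0) + w 0 ⬝ᵥ (em *ᵥ w'0)) 0 :=
    hasDerivAt_dot hw0d (hasDerivAt_const_mulVec hw0d)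
  have hval2 : w'0 ⬝ᵥ (em *ᵥ w 0) + w 0 ⬝ᵥ (em *ᵥ w'0)
      = ∑ k ∈ Finset.univ.erase i, 2 * em i k ^ 2 / (lam i - lam k) := by
    have e1 : w'0 ⬝ᵥ (em *ᵥ w 0) = w 0 ⬝ᵥ (em *ᵥ w'0) := by
      rw [dot_mulVec_symm hems w'0 (w 0), dotProduct_comm]
    have e2 : w 0 ⬝ᵥ (em *ᵥ w'0) = ∑ k, em i k * w'0 k := by
      rw [w0, single_dotProduct, one_mul]
      rfl
    rw [e1, e2, ← two_mul, Finset.mul_sum]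
    rw [← Finset.add_sum_erase _ _ (Finset.mem_univ i)]
    rw [hw'0i, mul_zero, mul_zero, zero_add]
    apply Finset.sum_congr rfl
    intro k hk
    have hki : k ≠ i := Finset.ne_of_mem_erase hk
    rw [hw'0k k hki]
    have hsym : em k i = em i k := by
      conv_lhs => rw [← hems]
      rfl
    rw [hsym]
    ring
  rw [hval2] at hR2
  have hfeq2 : deriv h =ᶠ[𝓝 (0:ℝ)] fun s => w s ⬝ᵥ (em *ᵥ w s) := by
    filter_upwards [step1] with s hs
    exact hs.deriv
  exact hR2.congr_of_eventuallyEq hfeq2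


theorem clm_expand (φ : (Fin m → ℝ) →L[ℝ] ℝ) (x : Fin m → ℝ) :
    φ x = ∑ i, x i * φ (Pi.single i 1) := by
  have hx : x = ∑ i, x i • (Pi.single i 1 : Fin m → ℝ) := by
    funext k
    rw [Finset.sum_apply]
    simp [Pi.single_apply, Finset.sum_ite_eq']
  conv_lhs => rw [hx]
  rw [map_sum]
  exact Finset.sum_congr rfl fun i _ => by rw [_root_.map_smul]; rfl

theorem sum_erase_swap (g : Fin m → Fin m → ℝ) :
    ∑ i, ∑ j ∈ Finset.univ.erase i, g i j = ∑ i, ∑ j ∈ Finset.univ.erase i, g j i := by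
  classical
  have h : ∀ (g : Fin m → Fin m → ℝ) (i : Fin m),
      ∑ j ∈ Finset.univ.erase i, g i j = ∑ j, if j ≠ i then g i j else 0 := by
    intro g i
    rw [← Finset.sum_filter, Finset.filter_ne']
  simp only [h (fun i j => g i j), h (fun i j => g j i)]
  rw [Finset.sum_comm]
  apply Finset.sum_congr rfl
  intro i _
  apply Finset.sum_congr rfl
  intro j _
  by_cases hij : i = j
  · simp [hij]
  · simp [hij, Ne.symm hij]

end Aux

set_option maxHeartbeats 2000000 in
set_option synthInstance.maxHeartbeats 1000000 in
/-- Lemma of Andrews–Gerhardt: if `f` is `C²` and symmetric on an open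
permutation-invariant `Ω ⊆ ℝ^m` and `λ ∈ Ω` has pairwise distinct entries, then
`F(B) = f(λ(B))` on `Sym_m` is twice differentiable at `A = diag(λ)` with
`D²F(A)[η,η] = ∑_{i,j} ∂²f/∂λᵢ∂λⱼ(λ) ηᵢᵢ ηⱼⱼ + ∑_{i≠j} ((fᵢ(λ)-fⱼ(λ))/(λᵢ-λⱼ)) ηᵢⱼ²`. -/

theorem stmt_4 (m : ℕ) (hm : 2 ≤ m)
    (Ω : Set (Fin m → ℝ)) (hΩopen : IsOpen Ω)
    (hΩperm : ∀ π : Equiv.Perm (Fin m), ∀ x ∈ Ω, x ∘ π ∈ Ω)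
    (f : (Fin m → ℝ) → ℝ)
    (hf : ContDiffOn ℝ 2 f Ω)
    (hfsymm : ∀ π : Equiv.Perm (Fin m), ∀ x ∈ Ω, f (x ∘ π) = f x)
    (lam : Fin m → ℝ) (hlam : lam ∈ Ω) (hdist : Function.Injective lam)
    (A : SymMat m) (hAdiag : (A : Matrix (Fin m) (Fin m) ℝ) = Matrix.diagonal lam) :
    (∀ᶠ B in nhds A, DifferentiableAt ℝ (fun B : SymMat m => f (eigVec B)) B) ∧
    DifferentiableAt ℝ (fderiv ℝ (fun B : SymMat m => f (eigVec B))) A ∧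
    ∀ η : SymMat m,
      fderiv ℝ (fderiv ℝ (fun B : SymMat m => f (eigVec B))) A η η
        = (∑ i, ∑ j, pd2 f lam i j * (η : Matrix (Fin m) (Fin m) ℝ) i i
              * (η : Matrix (Fin m) (Fin m) ℝ) j j)
          + ∑ i, ∑ j ∈ Finset.univ.erase i,
              ((pd f lam i - pd f lam j) / (lam i - lam j))
                * ((η : Matrix (Fin m) (Fin m) ℝ) i j) ^ 2 := by
  classical
  set A0 : MatE m := Matrix.diagonal lam with hA0
  obtain ⟨mu, v, hmuc, hvc, hmu0, hv0, hev, hinj⟩ := exists_mu hdist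
  set ι : SymMat m →L[ℝ] MatE m := (SymMat m).subtypeL with hι
  have hιA : (A : MatE m) = A0 := hAdiag
  set F : SymMat m → ℝ := fun B => f (eigVec B) with hF
  set G : SymMat m → ℝ := fun B => f (mu (B : MatE m)) with hG
  have hfA : ContDiffAt ℝ 2 f lam := hf.contDiffAt (hΩopen.mem_nhds hlam)
  -- (K1)
  have hGc : ContDiffAt ℝ 2 G A := by
    have hfmu : ContDiffAt ℝ 2 f (mu A0) := by rw [hmu0]; exact hfA
    have h1 : ContDiffAt ℝ 2 (fun B : MatE m => f (mu B)) A0 :=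
      ContDiffAt.comp _ hfmu (hmuc.of_le le_top)
    have h1' : ContDiffAt ℝ 2 (fun B : MatE m => f (mu B)) (ι A) := by
      have hA' : (ι A : MatE m) = A0 := hιA
      rw [hA']; exact h1
    have := ContDiffAt.comp (g := fun B : MatE m => f (mu B))
      (f := fun B : SymMat m => (ι B : MatE m)) A h1' (ι.contDiff.contDiffAt)
    exact this
  -- (K2)
  have hvalten : Tendsto (fun B : SymMat m => (B : MatE m)) (𝓝 A) (𝓝 A0) := by
    rw [← hιA]
    exact (continuous_subtype_val.tendsto A)
  have hΩev : ∀ᶠ B : MatE m in 𝓝 A0, mu B ∈ Ω := by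
    have hmem : ∀ᶠ y in 𝓝 (mu A0), y ∈ Ω := by
      rw [hmu0]; exact hΩopen.eventually_mem hlam
    exact hmuc.continuousAt.eventually hmem
  have hFG : F =ᶠ[𝓝 A] G := by
    filter_upwards [hvalten.eventually hev, hvalten.eventually hinj,
      hvalten.eventually hΩev] with B hB hBinj hBΩ
    have hherm : (B : MatE m).IsHermitian := IsSymm.isHermitianR B.2
    have hroot : ∀ j, ((B : MatE m) - mu (B : MatE m) j • 1).det = 0 := by
      intro j
      have hvne : v j (B : MatE m) ≠ 0 := by
        intro h0
        have h2 := (hB j).2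
        rw [h0] at h2
        simp at h2
      have hmv : ((B : MatE m) - mu (B : MatE m) j • 1) *ᵥ v j (B : MatE m) = 0 := by
        rw [Matrix.sub_mulVec, (hB j).1, Matrix.smul_mulVec, Matrix.one_mulVec, sub_self]
      exact (Matrix.exists_mulVec_eq_zero_iff).mp ⟨v j (B : MatE m), hvne, hmv⟩
    have hmeq := multiset_eig_eq hherm hBinj hroot
    obtain ⟨σ, hσ⟩ := exists_perm_comp hBinj hmeq
    show f (eigVec B) = f (mu (B : MatE m))
    have heig : eigVec B = mu (B : MatE m) ∘ σ := hσ
    rw [heig]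
    exact hfsymm σ _ hBΩ
  -- Goal 1
  have goal1 : ∀ᶠ B in 𝓝 A, DifferentiableAt ℝ F B := by
    filter_upwards [hGc.eventually (by simp), eventually_eventually_nhds.mpr hFG] with B h1 h2
    have h2' : F =ᶠ[𝓝 B] G := h2
    exact (h2'.differentiableAt_iff).mpr (h1.differentiableAt two_ne_zero)
  have hfdeq : fderiv ℝ F =ᶠ[𝓝 A] fderiv ℝ G := hFG.fderiv
  have hdG : DifferentiableAt ℝ (fderiv ℝ G) A := by
    have h21 : ContDiffAt ℝ (1 + 1) G A := hGc
    exact (h21.fderiv_right (le_refl _)).differentiableAt (by simp)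
  have goal2 : DifferentiableAt ℝ (fderiv ℝ F) A :=
    (hfdeq.differentiableAt_iff).mpr hdG
  refine ⟨goal1, goal2, ?_⟩
  intro η
  have hsndeq : fderiv ℝ (fderiv ℝ F) A = fderiv ℝ (fderiv ℝ G) A := hfdeq.fderiv_eq
  rw [hsndeq]
  set ηm : MatE m := (η : MatE m) with hηm
  have hηs : ηm.IsSymm := η.2
  set cl : ℝ → SymMat m := fun s => A + s • η with hcl
  have hcd : ∀ s : ℝ, HasDerivAt cl η s := fun s => by
    have := ((hasDerivAt_id' s).smul_const η).const_add A; rwa [one_smul] at this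
  have hc0 : cl 0 = A := by simp [hcl]
  have hcten : Tendsto cl (𝓝 0) (𝓝 A) := by
    have h' : Tendsto cl (𝓝 0) (𝓝 (cl 0)) := (hcd 0).continuousAt
    rwa [hc0] at h'
  set hh : ℝ → (Fin m → ℝ) := fun s => mu (A0 + s • ηm) with hhdef
  have hcoe : ∀ s : ℝ, ((cl s : SymMat m) : MatE m) = A0 + s • ηm := by
    intro s
    rw [hcl]
    simp only [Submodule.coe_add, SetLike.val_smul]
    rw [hιA]
  have hγ : (fun s => G (cl s)) = fun s => f (hh s) := by
    funext s
    show f (mu ((cl s : SymMat m) : MatE m)) = f (hh s)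
    rw [hcoe s]
  -- T1 : second derivative of G along the line
  have evc : ∀ᶠ s in 𝓝 (0:ℝ), ContDiffAt ℝ 2 G (cl s) :=
    hcten.eventually (hGc.eventually (by simp))
  have step : ∀ᶠ s in 𝓝 (0:ℝ), HasDerivAt (fun t => G (cl t)) (fderiv ℝ G (cl s) η) s := by
    filter_upwards [evc] with s hs
    have := (hs.differentiableAt two_ne_zero).hasFDerivAt.comp_hasDerivAt s (hcd s)
    exact this
  have derg : deriv (fun t => G (cl t)) =ᶠ[𝓝 (0:ℝ)] fun s => fderiv ℝ G (cl s) η := by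
    filter_upwards [step] with s hs
    exact hs.deriv
  have h1 : HasDerivAt (fun s => fderiv ℝ G (cl s)) (fderiv ℝ (fderiv ℝ G) A η) 0 := by
    have hl : HasFDerivAt (fderiv ℝ G) (fderiv ℝ (fderiv ℝ G) A) (cl 0) := by
      rw [hc0]; exact hdG.hasFDerivAt
    letI : NormedAddCommGroup (SymMat m →L[ℝ] ℝ) := ContinuousLinearMap.toNormedAddCommGroup
    letI : NormedSpace ℝ (SymMat m →L[ℝ] ℝ) := ContinuousLinearMap.toNormedSpace
    have := hl.comp_hasDerivAt (f := cl) 0 (hcd 0)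
    exact this
  have h2 : HasDerivAt (fun s => fderiv ℝ G (cl s) η) (fderiv ℝ (fderiv ℝ G) A η η) 0 := by
    have := h1.clm_apply (hasDerivAt_const 0 η)
    exact this.congr_deriv (add_eq_left.mpr ((fderiv ℝ G (cl 0)).map_zero))
  have T1 : fderiv ℝ (fderiv ℝ G) A η η = deriv (deriv (fun t => G (cl t))) 0 := by
    rw [Filter.EventuallyEq.deriv_eq derg, h2.deriv]
  -- line derivative facts for hh
  have hld := fun i : Fin m => line_derivs hdist hηs hmuc hvc hmu0 hv0 hev i
  set d : Fin m → ℝ := fun i => ηm i i with hd_def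
  set q : Fin m → ℝ :=
    fun i => ∑ k ∈ Finset.univ.erase i, 2 * ηm i k ^ 2 / (lam i - lam k) with hq_def
  have hd : HasDerivAt hh d 0 := hasDerivAt_pi.mpr fun i => (hld i).1
  have hLd : ∀ s : ℝ, HasDerivAt (fun t : ℝ => A0 + t • ηm) ηm s := fun s => by
    have := ((hasDerivAt_id' s).smul_const ηm).const_add A0; rwa [one_smul] at this
  have hLten : Tendsto (fun t : ℝ => A0 + t • ηm) (𝓝 0) (𝓝 A0) := by
    have h' : Tendsto (fun t : ℝ => A0 + t • ηm) (𝓝 0) (𝓝 (A0 + (0:ℝ) • ηm)) :=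
      (hLd 0).continuousAt
    rwa [zero_smul, add_zero] at h'
  have evdiffhh : ∀ᶠ s in 𝓝 (0:ℝ), DifferentiableAt ℝ hh s := by
    have h2' : ContDiffAt ℝ 2 mu A0 := hmuc.of_le le_top
    filter_upwards [hLten.eventually (h2'.eventually (by simp))] with s hs
    exact (hs.differentiableAt two_ne_zero).comp s (hLd s).differentiableAt
  have hderiv_pi : deriv hh =ᶠ[𝓝 (0:ℝ)]
      fun s => fun i => deriv (fun t : ℝ => mu (A0 + t • ηm) i) s := by
    filter_upwards [evdiffhh] with s hs
    funext i
    exact ((hasDerivAt_pi.mp hs.hasDerivAt i).deriv).symm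
  have hq : HasDerivAt (fun s => fun i => deriv (fun t : ℝ => mu (A0 + t • ηm) i) s) q 0 :=
    hasDerivAt_pi.mpr fun i => (hld i).2
  have hd2 : HasDerivAt (deriv hh) q 0 := hq.congr_of_eventuallyEq hderiv_pi
  -- T2 : second derivative via f ∘ hh
  have hh0 : hh 0 = lam := by
    show mu (A0 + (0:ℝ) • ηm) = lam
    rw [zero_smul, add_zero, hmu0]
  have hhten : Tendsto hh (𝓝 0) (𝓝 lam) := by
    have h' : Tendsto hh (𝓝 0) (𝓝 (hh 0)) := hd.continuousAt
    rwa [hh0] at h'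
  have evf : ∀ᶠ s in 𝓝 (0:ℝ), ContDiffAt ℝ 2 f (hh s) :=
    hhten.eventually (hfA.eventually (by simp))
  have step2 : ∀ᶠ s in 𝓝 (0:ℝ),
      HasDerivAt (fun t => f (hh t)) (fderiv ℝ f (hh s) (deriv hh s)) s := by
    filter_upwards [evf, evdiffhh] with s hs1 hs2
    have := (hs1.differentiableAt two_ne_zero).hasFDerivAt.comp_hasDerivAt s hs2.hasDerivAt
    exact this
  have derg2 : deriv (fun t => f (hh t)) =ᶠ[𝓝 (0:ℝ)]
      fun s => fderiv ℝ f (hh s) (deriv hh s) := by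
    filter_upwards [step2] with s hs
    exact hs.deriv
  have hdf : DifferentiableAt ℝ (fderiv ℝ f) lam :=
    ((hfA.fderiv_right (m := 1) (by norm_num)).differentiableAt (by simp))
  have h3 : HasDerivAt (fun s => fderiv ℝ f (hh s)) (fderiv ℝ (fderiv ℝ f) lam d) 0 := by
    have hl : HasFDerivAt (fderiv ℝ f) (fderiv ℝ (fderiv ℝ f) lam) (hh 0) := by
      rw [hh0]; exact hdf.hasFDerivAt
    have := hl.comp_hasDerivAt 0 hd
    exact this
  have h4 : HasDerivAt (fun s => fderiv ℝ f (hh s) (deriv hh s))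
      (fderiv ℝ (fderiv ℝ f) lam d d + fderiv ℝ f lam q) 0 := by
    have := h3.clm_apply hd2
    rwa [hd.deriv, hh0] at this
  have T2 : deriv (deriv (fun t => G (cl t))) 0
      = fderiv ℝ (fderiv ℝ f) lam d d + fderiv ℝ f lam q := by
    rw [hγ, Filter.EventuallyEq.deriv_eq derg2, h4.deriv]
  rw [T1, T2]
  -- T3 : algebraic identification with pd/pd2 sums
  have pd2_eq : ∀ i j, pd2 f lam i j
      = fderiv ℝ (fderiv ℝ f) lam (Pi.single i 1) (Pi.single j 1) := by
    intro i j
    unfold pd2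
    have := fderiv_clm_apply (𝕜 := ℝ) (c := fderiv ℝ f)
      (u := fun _ => (Pi.single j 1 : Fin m → ℝ)) (x := lam) hdf (differentiableAt_const _)
    rw [this]
    simp
  have expand2 : fderiv ℝ (fderiv ℝ f) lam d d
      = ∑ i, ∑ j, pd2 f lam i j * ηm i i * ηm j j := by
    have e1 : fderiv ℝ (fderiv ℝ f) lam d d
        = ∑ i, d i * (fderiv ℝ (fderiv ℝ f) lam (Pi.single i 1) d) := by
      exact clm_expand ((fderiv ℝ (fderiv ℝ f) lam).flip d) d
    rw [e1]
    apply Finset.sum_congr rfl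
    intro i _
    rw [clm_expand (fderiv ℝ (fderiv ℝ f) lam (Pi.single i 1)) d, Finset.mul_sum]
    apply Finset.sum_congr rfl
    intro j _
    rw [pd2_eq i j]
    show d i * (d j * _) = _ * ηm i i * ηm j j
    rw [hd_def]
    ring
  have expand1 : fderiv ℝ f lam q = ∑ i, q i * pd f lam i := by
    rw [clm_expand (fderiv ℝ f lam) q]
    apply Finset.sum_congr rfl
    intro i _
    rfl
  rw [expand2, expand1]
  congr 1
  -- remaining: ∑ i, q i * pd f lam i = ∑ i, ∑ j ∈ erase i, (pd i - pd j)/(lam i - lam j) * ηm i j ^ 2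
  have swap : ∑ i, ∑ j ∈ Finset.univ.erase i,
      (pd f lam j / (lam i - lam j)) * ηm i j ^ 2
      = ∑ i, ∑ j ∈ Finset.univ.erase i,
        (pd f lam i / (lam j - lam i)) * ηm j i ^ 2 :=
    sum_erase_swap _
  have hsymη : ∀ i j : Fin m, ηm j i = ηm i j := by
    intro i j
    conv_lhs => rw [← hηs]
    rfl
  rw [eq_comm]
  calc ∑ i, ∑ j ∈ Finset.univ.erase i,
        (pd f lam i - pd f lam j) / (lam i - lam j) * ηm i j ^ 2
      = ∑ i, ∑ j ∈ Finset.univ.erase i,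
        ((pd f lam i / (lam i - lam j)) * ηm i j ^ 2
          - (pd f lam j / (lam i - lam j)) * ηm i j ^ 2) := by
        apply Finset.sum_congr rfl; intro i _
        apply Finset.sum_congr rfl; intro j _
        ring
    _ = ∑ i, ∑ j ∈ Finset.univ.erase i, (pd f lam i / (lam i - lam j)) * ηm i j ^ 2
        - ∑ i, ∑ j ∈ Finset.univ.erase i, (pd f lam j / (lam i - lam j)) * ηm i j ^ 2 := by
        rw [← Finset.sum_sub_distrib]
        apply Finset.sum_congr rfl; intro i _
        rw [← Finset.sum_sub_distrib]
    _ = ∑ i, ∑ j ∈ Finset.univ.erase i, (pd f lam i / (lam i - lam j)) * ηm i j ^ 2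
        - ∑ i, ∑ j ∈ Finset.univ.erase i, (pd f lam i / (lam j - lam i)) * ηm j i ^ 2 := by
        rw [swap]
    _ = ∑ i, ∑ j ∈ Finset.univ.erase i, 2 * (pd f lam i / (lam i - lam j)) * ηm i j ^ 2 := by
        rw [← Finset.sum_sub_distrib]
        apply Finset.sum_congr rfl; intro i _
        rw [← Finset.sum_sub_distrib]
        apply Finset.sum_congr rfl; intro j hj
        rw [hsymη i j]
        have hrw : lam j - lam i = -(lam i - lam j) := by ring
        rw [hrw, div_neg, neg_mul, sub_neg_eq_add]
        ring
    _ = ∑ i, q i * pd f lam i := by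
        apply Finset.sum_congr rfl; intro i _
        rw [hq_def, Finset.sum_mul]
        apply Finset.sum_congr rfl; intro j hj
        ring
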